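/- Let G = Fₙ × ℤ^m be the direct product of a free group of finite rank n with the free-abelian group ℤ^m, and let H be a finitely generated subgroup of G. Then there exists g ∈ G with Ord_H(g) = 0 (i.e., no positive power of g lies in H) if and only if H has infinite index in G. -/

import Mathlib

set_option linter.unusedSectionVars false

/-- The relative order of `g` in the subgroup `H`: the least `k ≥ 1` with `g ^ k ∈ H`,
and `0` if no such `k` exists. -/
noncomputable def relOrd {G : Type*} [Group G] (H : Subgroup G) (g : G) : ℕ :=
  sInf {k : ℕ | 1 ≤ k ∧ g ^ k ∈ H}

namespace RelOrdAux
variable {α : Type*} [DecidableEq α]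

abbrev C (a b : α × Bool) : Prop := b ≠ (a.1, !a.2)

noncomputable def PrefL (S : Finset (FreeGroup α)) : List (List (α × Bool)) :=
  [] :: S.toList.flatMap (fun s => (FreeGroup.toWord s).inits ++ (FreeGroup.toWord s⁻¹).inits)

def InCore (S : Finset (FreeGroup α)) (K : Subgroup (FreeGroup α)) (g : FreeGroup α) : Prop :=
  ∃ q ∈ PrefL S, g * (FreeGroup.mk q)⁻¹ ∈ K

theorem invRev_append (L₁ L₂ : List (α × Bool)) :
    FreeGroup.invRev (L₁ ++ L₂) = FreeGroup.invRev L₂ ++ FreeGroup.invRev L₁ := by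
  simp [FreeGroup.invRev]

theorem invRev_singleton (a : α × Bool) :
    FreeGroup.invRev [a] = [(a.1, !a.2)] := by
  simp [FreeGroup.invRev]

theorem reduce_eq_self_of_chain' {L : List (α × Bool)} (h : List.Chain' C L) :
    FreeGroup.reduce L = L := by
  induction L with
  | nil => rfl
  | cons x L ih =>
    rw [FreeGroup.reduce.cons, ih h.tail]
    cases L with
    | nil => rfl
    | cons y t =>
      have hxy := (List.isChain_cons_cons.1 h).1
      simp only
      rw [if_neg]
      rintro ⟨h1, h2⟩
      exact hxy (by obtain ⟨y1,y2⟩ := y; obtain ⟨x1,x2⟩ := x; simp_all)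

theorem exists_of_not_chain' {β : Type*} {r : β → β → Prop} {L : List β}
    (h : ¬ List.Chain' r L) :
    ∃ L₁ a b L₂, L = L₁ ++ a :: b :: L₂ ∧ ¬ r a b := by
  induction L with
  | nil => exact absurd List.isChain_nil h
  | cons x L ih =>
    cases L with
    | nil => exact absurd (List.isChain_singleton x) h
    | cons y t =>
      simp only [List.Chain'] at h
      rw [List.isChain_cons_cons] at h
      by_cases hxy : r x y
      · obtain ⟨L₁, a, b, L₂, hEq, hr⟩ := ih (fun hc => h ⟨hxy, hc⟩)
        exact ⟨x :: L₁, a, b, L₂, by simp [hEq], hr⟩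
      · exact ⟨[], x, y, t, rfl, hxy⟩

theorem chain'_of_reduce_eq_self {L : List (α × Bool)} (h : FreeGroup.reduce L = L) :
    List.Chain' C L := by
  by_contra hc
  obtain ⟨L₁, a, b, L₂, hEq, hr⟩ := exists_of_not_chain' hc
  have hb : b = (a.1, !a.2) := not_not.mp hr
  exact FreeGroup.reduce.not (L₁ := L) (L₂ := L₁) (L₃ := L₂) (x := a.1) (b := a.2)
    (by rw [h, hEq, hb])

theorem chain'_toWord (x : FreeGroup α) : List.Chain' C x.toWord :=
  chain'_of_reduce_eq_self (FreeGroup.reduce_toWord x)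

theorem cancel : ∀ (N : ℕ) (A B : List (α × Bool)), A.length ≤ N →
    List.Chain' C A → List.Chain' C B →
    ∃ A₁ D B₁, A = A₁ ++ D ∧ B = FreeGroup.invRev D ++ B₁ ∧
      FreeGroup.reduce (A ++ B) = A₁ ++ B₁ := by
  intro N
  induction N with
  | zero =>
    intro A B hlen hA hB
    have : A = [] := List.eq_nil_of_length_eq_zero (Nat.le_zero.mp hlen)
    subst this
    exact ⟨[], [], B, rfl, by simp, by simpa using reduce_eq_self_of_chain' hB⟩
  | succ N ih =>
    intro A B hlen hA hB
    rcases List.eq_nil_or_concat A with rfl | ⟨A', a, rfl⟩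
    · exact ⟨[], [], B, rfl, by simp, by simpa using reduce_eq_self_of_chain' hB⟩
    simp only [List.concat_eq_append] at hlen hA ⊢
    cases B with
    | nil =>
      exact ⟨A' ++ [a], [], [], by simp, by simp, by
        simpa using reduce_eq_self_of_chain' hA⟩
    | cons b B' =>
      by_cases hjunc : C a b
      · refine ⟨A' ++ [a], [], b :: B', by simp, by simp, ?_⟩
        apply reduce_eq_self_of_chain'
        simp only [List.Chain']
        rw [List.isChain_append]
        refine ⟨hA, hB, ?_⟩
        intro x hx y hy
        simp at hx hy
        subst hx; subst hy; exact hjunc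
      · have hb : b = (a.1, !a.2) := not_not.mp hjunc
        have hstep : FreeGroup.Red.Step ((A' ++ [a]) ++ b :: B') (A' ++ B') := by
          have : (A' ++ [a]) ++ b :: B' = A' ++ (a.1, a.2) :: (a.1, !a.2) :: B' := by
            simp [hb]
          rw [this]
          exact FreeGroup.Red.Step.not
        have hred : FreeGroup.reduce ((A' ++ [a]) ++ b :: B') =
            FreeGroup.reduce (A' ++ B') := FreeGroup.reduce.Step.eq hstep
        have hA' : List.Chain' C A' := hA.prefix ⟨[a], rfl⟩
        have hB' : List.Chain' C B' := hB.tail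
        have hlen' : A'.length ≤ N := by
          have := hlen; simp at this; omega
        obtain ⟨A₁, D, B₁, h1, h2, h3⟩ := ih A' B' hlen' hA' hB'
        refine ⟨A₁, D ++ [a], B₁, by rw [h1]; simp, ?_, by rw [hred, h3]⟩
        rw [invRev_append, invRev_singleton, ← hb]
        simp [h2]
theorem prefix_inCore (S : Finset (FreeGroup α)) (K : Subgroup (FreeGroup α))
    (hS : Subgroup.closure (S : Set (FreeGroup α)) = K) :
    ∀ (l : List (FreeGroup α)), (∀ y ∈ l, y ∈ (S : Set (FreeGroup α)) ∨ y⁻¹ ∈ (S : Set (FreeGroup α))) →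
    ∀ p, p <+: FreeGroup.toWord l.prod → InCore S K (FreeGroup.mk p) := by
  intro l
  induction l using List.reverseRecOn with
  | nil =>
    intro _ p hp
    rw [List.prod_nil] at hp
    have : p = [] := List.prefix_nil.mp (by simpa using hp)
    subst this
    exact ⟨[], List.mem_cons_self, by simp [← FreeGroup.one_eq_mk, one_mem]⟩
  | append_singleton l₀ s ih =>
    intro hmem p hp
    have hmem₀ : ∀ y ∈ l₀, y ∈ (S : Set (FreeGroup α)) ∨ y⁻¹ ∈ (S : Set (FreeGroup α)) :=
      fun y hy => hmem y (by simp [hy])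
    have hs : s ∈ (S : Set (FreeGroup α)) ∨ s⁻¹ ∈ (S : Set (FreeGroup α)) :=
      hmem s (by simp)
    set A := FreeGroup.toWord l₀.prod with hAdef
    set B := FreeGroup.toWord s with hBdef
    obtain ⟨A₁, D, B₁, h1, h2, h3⟩ := cancel A.length A B le_rfl
      (chain'_toWord _) (chain'_toWord _)
    have hprod : (l₀ ++ [s]).prod = FreeGroup.mk (A ++ B) := by
      rw [List.prod_append, List.prod_singleton, ← FreeGroup.mul_mk,
        hAdef, hBdef, FreeGroup.mk_toWord, FreeGroup.mk_toWord]
    have hW : FreeGroup.toWord (l₀ ++ [s]).prod = A₁ ++ B₁ := by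
      rw [hprod, FreeGroup.toWord_mk, h3]
    rw [hW] at hp
    have hA₁ : A₁ <+: (A₁ ++ B₁) := ⟨B₁, rfl⟩
    rcases List.prefix_or_prefix_of_prefix hp hA₁ with hcase | hcase
    · -- p prefix of A₁, hence of A
      exact ih hmem₀ p (hcase.trans ⟨D, h1.symm⟩)
    · -- A₁ prefix of p
      obtain ⟨p', rfl⟩ := hcase
      have hp' : p' <+: B₁ := by
        obtain ⟨t, ht⟩ := hp
        exact ⟨t, by simpa using ht⟩
      set q := FreeGroup.invRev D ++ p' with hqdef
      have hqB : q <+: B := by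
        obtain ⟨t, ht⟩ := hp'
        exact ⟨t, by rw [h2, hqdef, List.append_assoc, ht]⟩
      have hqmem : q ∈ PrefL S := by
        rcases hs with hs | hs
        · refine List.mem_cons_of_mem _ (List.mem_flatMap.mpr ⟨s, Finset.mem_toList.mpr hs, ?_⟩)
          exact List.mem_append_left _ ((List.mem_inits _ _).mpr hqB)
        · refine List.mem_cons_of_mem _ (List.mem_flatMap.mpr ⟨s⁻¹, Finset.mem_toList.mpr hs, ?_⟩)
          refine List.mem_append_right _ ((List.mem_inits _ _).mpr ?_)
          rwa [inv_inv]
      refine ⟨q, hqmem, ?_⟩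
      have hcalc : FreeGroup.mk (A₁ ++ p') * (FreeGroup.mk q)⁻¹ = l₀.prod := by
        rw [hqdef, ← FreeGroup.mul_mk, ← FreeGroup.mul_mk, mul_inv_rev,
          show (FreeGroup.mk (FreeGroup.invRev D))⁻¹ = FreeGroup.mk D by
            rw [FreeGroup.inv_mk, FreeGroup.invRev_invRev], ← mul_assoc]
        calc FreeGroup.mk A₁ * FreeGroup.mk p' * (FreeGroup.mk p')⁻¹ * FreeGroup.mk D
            = FreeGroup.mk A₁ * FreeGroup.mk D := by group
          _ = FreeGroup.mk (A₁ ++ D) := FreeGroup.mul_mk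
          _ = FreeGroup.mk A := by rw [h1]
          _ = l₀.prod := by rw [hAdef, FreeGroup.mk_toWord]
      rw [hcalc, ← hS]
      apply list_prod_mem
      intro y hy
      rcases hmem₀ y hy with h | h
      · exact Subgroup.subset_closure h
      · exact (Subgroup.inv_mem_iff _).mp (Subgroup.subset_closure h)
theorem chain'_snd_eq {L : List (α × Bool)} (h : List.Chain' (fun x y : α × Bool => x.2 = y.2) L)
    (hne : L ≠ []) : (L.head hne).2 = (L.getLast hne).2 := by
  induction L with
  | nil => exact absurd rfl hne
  | cons x L ih =>
    cases L with
    | nil => rfl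
    | cons y t =>
      have h1 := (List.isChain_cons_cons.1 h).1
      have h2 := (List.isChain_cons_cons.1 h).2
      rw [List.head_cons, List.getLast_cons (by simp)]
      rw [h1]
      exact ih h2 (by simp)

theorem chain'_flatten_replicate {P : List (α × Bool)} (hP : List.Chain' C P)
    (hPne : P ≠ []) (hjunc : C (P.getLast hPne) (P.head hPne)) :
    ∀ k, List.Chain' C (List.replicate k P).flatten := by
  intro k
  induction k with
  | zero => exact List.isChain_nil
  | succ k ih =>
    simp only [List.Chain']
    rw [List.replicate_succ, List.flatten_cons, List.isChain_append]
    refine ⟨hP, ih, ?_⟩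
    intro x hx y hy
    cases k with
    | zero => simp at hy
    | succ k =>
      rw [List.replicate_succ, List.flatten_cons] at hy
      rw [List.head?_append_of_ne_nil _ hPne] at hy
      rw [List.getLast?_eq_getLast hPne] at hx
      rw [List.head?_eq_head hPne] at hy
      simp at hx hy
      subst hx; subst hy
      exact hjunc

theorem free_lemma (K : Subgroup (FreeGroup α)) (hfg : K.FG) (hidx : K.index = 0) :
    ∃ x : FreeGroup α, ∀ k, 1 ≤ k → x ^ k ∉ K := by
  obtain ⟨S, hS⟩ := hfg
  -- infinitude of right cosets
  have hinf : Infinite (Quotient (QuotientGroup.rightRel K)) := by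
    have h1 : Nat.card (FreeGroup α ⧸ K) = 0 := hidx
    rcases Nat.card_eq_zero.mp h1 with h | h
    · exact absurd ⟨QuotientGroup.mk (1 : FreeGroup α)⟩ (not_nonempty_iff.mpr h)
    · exact (Equiv.infinite_iff (QuotientGroup.quotientRightRelEquivQuotientLeftRel K)).mpr h
  -- find an element outside the core
  have hout : ∃ g : FreeGroup α, ¬ InCore S K g := by
    by_contra hcon
    push_neg at hcon

    have hfin : Finite {q // q ∈ PrefL S} := List.finite_toSet (PrefL S) |>.to_subtype
    have hinj : Function.Injective
        (fun c : Quotient (QuotientGroup.rightRel K) =>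
          (⟨(hcon c.out).choose, (hcon c.out).choose_spec.1⟩ : {q // q ∈ PrefL S})) := by
      intro c₁ c₂ hEq
      have h1 := (hcon c₁.out).choose_spec.2
      have h2 := (hcon c₂.out).choose_spec.2
      have hq : (hcon c₁.out).choose = (hcon c₂.out).choose := congrArg Subtype.val hEq
      rw [hq] at h1
      set u := (FreeGroup.mk (hcon c₂.out).choose)⁻¹
      have hmem : c₁.out * c₂.out⁻¹ ∈ K := by
        have h3 := mul_mem h1 (inv_mem h2)
        have h4 : c₁.out * u * (c₂.out * u)⁻¹ = c₁.out * c₂.out⁻¹ := by group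
        rwa [h4] at h3
      have : c₂ = c₁ := Quotient.out_equiv_out.mp (QuotientGroup.rightRel_apply.mpr hmem)
      exact this.symm
    exact (Finite.of_injective _ hinj).not_infinite hinf
  obtain ⟨g, hg⟩ := hout
  -- the bad prefix
  set p := FreeGroup.toWord g with hpdef
  have hpchain : List.Chain' C p := chain'_toWord g
  have hpne : p ≠ [] := by
    intro hnil
    apply hg
    have : g = 1 := FreeGroup.toWord_eq_nil_iff.mp hnil
    exact ⟨[], List.mem_cons_self, by simp [this, ← FreeGroup.one_eq_mk, one_mem]⟩
  set a := p.getLast hpne with hadef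
  set f := p.head hpne with hfdef
  -- choose the extra letter b
  have hbex : ∃ b : α × Bool, C a b ∧ C b f := by
    by_cases haf : C a f
    · exact ⟨a, fun h => by simpa using congrArg Prod.snd h, haf⟩
    · have hf : f = (a.1, !a.2) := not_not.mp haf
      have hjex : ∃ j : α, j ≠ a.1 := by
        by_contra hall
        push_neg at hall
        have hsnd : List.Chain' (fun x y : α × Bool => x.2 = y.2) p := by
          apply hpchain.imp
          intro x y hxy
          by_contra hne
          apply hxy
          have h1 : y.1 = x.1 := (hall y.1).trans (hall x.1).symm
          have h2 : y.2 = !x.2 := by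
            cases hx2 : x.2 <;> cases hy2 : y.2 <;> simp_all
          exact Prod.ext h1 h2
        have := chain'_snd_eq hsnd hpne
        rw [← hfdef, ← hadef, hf] at this
        simp at this
      obtain ⟨j, hj⟩ := hjex
      refine ⟨(j, true), ?_, ?_⟩
      · intro hEq; exact hj (congrArg Prod.fst hEq)
      · rw [hf]; intro hEq
        exact hj (congrArg Prod.fst hEq).symm
  obtain ⟨b, hab, hbf⟩ := hbex
  set P := p ++ [b] with hPdef
  have hPne : P ≠ [] := by simp [hPdef]
  have hPchain : List.Chain' C P := by
    simp only [List.Chain']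
    rw [hPdef, List.isChain_append]
    refine ⟨hpchain, List.isChain_singleton b, ?_⟩
    intro x hx y hy
    rw [List.getLast?_eq_getLast hpne] at hx
    simp at hx hy
    subst hx; subst hy
    exact hab
  have hPlast : P.getLast hPne = b := List.getLast_append _
  have hPhead : P.head hPne = f := List.head_append_of_ne_nil hpne
  have hjunc : C (P.getLast hPne) (P.head hPne) := by rw [hPlast, hPhead]; exact hbf
  refine ⟨FreeGroup.mk P, ?_⟩
  intro k hk hpow
  -- toWord of the power
  have hW : FreeGroup.toWord (FreeGroup.mk P ^ k) = (List.replicate k P).flatten := by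
    rw [FreeGroup.pow_mk, FreeGroup.toWord_mk]
    exact reduce_eq_self_of_chain' (chain'_flatten_replicate hPchain hPne hjunc k)
  have hppre : p <+: FreeGroup.toWord (FreeGroup.mk P ^ k) := by
    rw [hW]
    obtain ⟨k', rfl⟩ := Nat.exists_eq_add_of_le hk
    rw [Nat.add_comm, List.replicate_succ, List.flatten_cons, hPdef]
    exact ⟨[b] ++ (List.replicate k' P).flatten, by simp [hPdef]⟩
  -- membership gives a word decomposition
  have hsub : FreeGroup.mk P ^ k ∈ Submonoid.closure ((S : Set (FreeGroup α)) ∪ (S : Set (FreeGroup α))⁻¹) := by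
    rw [← Subgroup.closure_toSubmonoid]
    exact (by rw [hS]; exact hpow : FreeGroup.mk P ^ k ∈ (Subgroup.closure (S : Set (FreeGroup α))).toSubmonoid)
  obtain ⟨l, hl, hlprod⟩ := Submonoid.exists_list_of_mem_closure hsub
  have hl' : ∀ y ∈ l, y ∈ (S : Set (FreeGroup α)) ∨ y⁻¹ ∈ (S : Set (FreeGroup α)) := by
    intro y hy
    rcases hl y hy with h | h
    · exact Or.inl h
    · exact Or.inr (Set.mem_inv.mp h)
  have := prefix_inCore S K hS l hl' p (by rw [hlprod]; exact hppre)
  rw [hpdef, FreeGroup.mk_toWord] at this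
  exact hg this
end RelOrdAux

theorem zmod_lemma {m : ℕ} (L : Subgroup (Multiplicative (Fin m → ℤ))) (h : L.index = 0) :
    ∃ a : Multiplicative (Fin m → ℤ), ∀ k, 1 ≤ k → a ^ k ∉ L := by
  have fgZ : Group.FG (Multiplicative (Fin m → ℤ)) := by
    have : AddGroup.FG (Fin m → ℤ) := Module.Finite.iff_addGroup_fg.mp inferInstance
    infer_instance
  have hQfg : Group.FG (Multiplicative (Fin m → ℤ) ⧸ L) :=
    Group.fg_of_surjective (QuotientGroup.mk'_surjective L)
  have hnt : ¬ Monoid.IsTorsion (Multiplicative (Fin m → ℤ) ⧸ L) := by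
    intro ht
    have hfin : Finite (Multiplicative (Fin m → ℤ) ⧸ L) := CommGroup.finite_of_fg_torsion _ ht
    have : Nat.card (Multiplicative (Fin m → ℤ) ⧸ L) ≠ 0 := Nat.card_ne_zero.mpr ⟨⟨1⟩, hfin⟩
    exact this h
  rw [Monoid.IsTorsion] at hnt
  rw [not_isMulTorsion_iff] at hnt
  obtain ⟨q, hq⟩ := hnt
  obtain ⟨a, rfl⟩ := QuotientGroup.mk'_surjective L q
  refine ⟨a, fun k hk hak => hq ?_⟩
  refine isOfFinOrder_iff_pow_eq_one.mpr ⟨k, hk, ?_⟩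
  rw [← map_pow]
  exact (QuotientGroup.eq_one_iff _).mpr hak

theorem relOrd_eq_zero_iff {G : Type*} [Group G] (H : Subgroup G) (g : G) :
    relOrd H g = 0 ↔ ∀ k, 1 ≤ k → g ^ k ∉ H := by
  rw [relOrd, Nat.sInf_eq_zero]
  constructor
  · rintro (⟨h0, _⟩ | hempty)
    · omega
    · intro k hk hgk
      exact absurd hempty (Set.nonempty_iff_ne_empty.mp ⟨k, hk, hgk⟩)
  · intro h
    right
    rw [Set.eq_empty_iff_forall_notMem]
    rintro k ⟨hk, hgk⟩
    exact h k hk hgk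

/-- In `Fₙ × ℤ^m`, a finitely generated subgroup `H` admits an element of relative order `0`
iff `H` has infinite index. -/
theorem exists_relOrd_zero_iff_infinite_index (n m : ℕ)
    (H : Subgroup (FreeGroup (Fin n) × Multiplicative (Fin m → ℤ))) (hH : H.FG) :
    (∃ g : FreeGroup (Fin n) × Multiplicative (Fin m → ℤ), relOrd H g = 0) ↔ H.index = 0 := by
  set F := FreeGroup (Fin n)
  set Z := Multiplicative (Fin m → ℤ)
  constructor
  · rintro ⟨g, hg⟩
    rw [relOrd_eq_zero_iff] at hg
    by_contra hidx
    obtain ⟨k, hk, _, hgk⟩ := Subgroup.exists_pow_mem_of_index_ne_zero hidx g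
    exact hg k hk hgk
  · intro hidx
    -- projections
    set fst : F × Z →* F := MonoidHom.fst F Z
    set P : Subgroup (F × Z) := (H.map fst).comap fst with hPdef
    have hHP : H ≤ P := fun h hh => ⟨h, hh, rfl⟩
    have hsplit : H.relIndex P = 0 ∨ P.index = 0 := by
      have := Subgroup.relIndex_mul_index hHP
      rw [hidx] at this
      exact Nat.mul_eq_zero.mp this
    rcases hsplit with hrel | hPidx
    · -- the Z part has infinite index
      set inr : Z →* F × Z := MonoidHom.inr F Z
      set L : Subgroup Z := H.comap inr with hLdef
      have hLidx : L.index = 0 := by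
        by_contra hL
        -- Z ⧸ L finite
        have hfinL : Finite (Z ⧸ L) := Nat.finite_of_card_ne_zero hL
        -- surjection Z ⧸ L → P ⧸ (H.subgroupOf P)
        have hmemP : ∀ z : Z, ((1 : F), z) ∈ P := by
          intro z
          exact ⟨(1 : F × Z), one_mem H, rfl⟩
        set φ₀ : Z → P ⧸ (H.subgroupOf P) := fun z => QuotientGroup.mk ⟨((1 : F), z), hmemP z⟩
        have hresp : ∀ z z' : Z, (QuotientGroup.leftRel L) z z' → φ₀ z = φ₀ z' := by
          intro z z' hzz
          rw [QuotientGroup.leftRel_apply] at hzz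
          apply (QuotientGroup.eq (s := H.subgroupOf P)).mpr
          rw [Subgroup.mem_subgroupOf]
          show ((1,z) : F × Z)⁻¹ * (1, z') ∈ H
          have : ((1,z) : F × Z)⁻¹ * (1, z') = ((1 : F), z⁻¹ * z') := by
            simp [Prod.ext_iff]
          rw [this]
          exact hzz
        set φ : Z ⧸ L → P ⧸ (H.subgroupOf P) := Quotient.lift φ₀ hresp
        have hsurj : Function.Surjective φ := by
          intro c
          obtain ⟨⟨⟨x, z⟩, hxz⟩, rfl⟩ := QuotientGroup.mk_surjective c
          obtain ⟨⟨x', w⟩, hw, hx'⟩ := hxz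
          have hx : x' = x := hx'
          refine ⟨QuotientGroup.mk (z * w⁻¹), ?_⟩
          show φ₀ (z * w⁻¹) = _
          apply (QuotientGroup.eq (s := H.subgroupOf P)).mpr
          rw [Subgroup.mem_subgroupOf]
          show ((1, z * w⁻¹) : F × Z)⁻¹ * (x, z) ∈ H
          have heq : ((1, z * w⁻¹) : F × Z)⁻¹ * (x, z) = (x', w) := by
            rw [Prod.ext_iff]
            constructor
            · simpa using hx.symm
            · show (z * w⁻¹)⁻¹ * z = w
              exact (by intro a b; group : ∀ a b : Multiplicative (Fin m → ℤ), (a * b⁻¹)⁻¹ * a = b) z w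
          rw [heq]
          exact hw
        have : Finite (P ⧸ (H.subgroupOf P)) := Finite.of_surjective φ hsurj
        have hne : H.relIndex P ≠ 0 := Nat.card_ne_zero.mpr ⟨⟨QuotientGroup.mk 1⟩, this⟩
        exact hne hrel
      obtain ⟨a, ha⟩ := zmod_lemma L hLidx
      refine ⟨((1 : F), a), ?_⟩
      rw [relOrd_eq_zero_iff]
      intro k hk hmem
      apply ha k hk
      have : (((1 : F), a) : F × Z) ^ k = ((1 : F), a ^ k) := by simp [Prod.pow_def]
      rw [this] at hmem
      exact hmem
    · -- the free part has infinite index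
      have hKidx : (H.map fst).index = 0 := by
        rwa [Subgroup.index_comap_of_surjective _ (fun x => ⟨(x, 1), rfl⟩)] at hPidx
      have hKfg : (H.map fst).FG := by
        obtain ⟨T, hT⟩ := hH
        exact ⟨T.image fst, by rw [Finset.coe_image, ← MonoidHom.map_closure, hT]⟩
      obtain ⟨x, hx⟩ := RelOrdAux.free_lemma (H.map fst) hKfg hKidx
      refine ⟨(x, (1 : Z)), ?_⟩
      rw [relOrd_eq_zero_iff]
      intro k hk hmem
      apply hx k hk
      refine ⟨(x, (1:Z)) ^ k, hmem, ?_⟩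
      show ((x, (1:Z)) ^ k).1 = x ^ k
      rw [Prod.pow_fst]
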